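/- For r > 0, let g : ℂ → ℂ be a function defined on ℂ ∖ B(0;r) satisfying |g(z) − g(v)| ≤ C(1 + |z − v|) for all z, v ∈ ℂ ∖ B(0;r), where C > 0 is a constant. Then there exists a function G : ℂ → ℂ such that G(z) = g(z) for all z ∈ ℂ ∖ B(0;r) and |G(z) − G(v)| ≤ 2C(1 + |z − v|) for all z, v ∈ ℂ. -/

import Mathlib

open MeasureTheory Metric Complex Filter
open scoped ENNReal

noncomputable section

/-- `Q m w` is the Taylor polynomial of `e^w` of order `m - 1` (with `Q 0 = 0`). -/
def Qc (m : ℕ) (w : ℂ) : ℂ := ∑ k ∈ Finset.range m, w ^ k / (Nat.factorial k : ℂ)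

/-- Real version of the Taylor polynomial of `e^x` of order `m - 1`. -/
def Qr (m : ℕ) (x : ℝ) : ℝ := ∑ k ∈ Finset.range m, x ^ k / (Nat.factorial k : ℝ)

/-- The weight `|e^{z̄v} − Q_m(z̄v)|² e^{−|v|²}`. -/
def kw (m : ℕ) (z v : ℂ) : ℝ :=
  ‖Complex.exp ((starRingEnd ℂ) z * v) - Qc m ((starRingEnd ℂ) z * v)‖ ^ 2 *
    Real.exp (-(‖v‖ ^ 2))

/-- The normalizing factor `π (e^{|z|²} − Q_m(|z|²))`. -/
def dz (m : ℕ) (z : ℂ) : ℝ :=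
  Real.pi * (Real.exp (‖z‖ ^ 2) - Qr m (‖z‖ ^ 2))

/-- The Berezin transform `B_m g`. -/
def berezin (m : ℕ) (g : ℂ → ℂ) (z : ℂ) : ℂ :=
  (dz m z)⁻¹ • ∫ v : ℂ, kw m z v • g v

/-- Local `p`-integrability of `g`. -/
def LocIntP (p : ℝ) (g : ℂ → ℂ) : Prop :=
  ∀ K : Set ℂ, IsCompact K → IntegrableOn (fun v => ‖g v‖ ^ p) K

/-- The mean `g̃_r(z)` of `g` over the closed disk `B(z;r)`. -/
def avg (r : ℝ) (g : ℂ → ℂ) (z : ℂ) : ℂ :=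
  (Real.pi * r ^ 2)⁻¹ • ∫ v in closedBall z r, g v

/-- `g ∈ BA_r^p`. -/
def MemBA (p r : ℝ) (g : ℂ → ℂ) : Prop :=
  ∃ C : ℝ, ∀ z : ℂ,
    (∫⁻ v in closedBall z r, ENNReal.ofReal (‖g v‖ ^ p)) / ENNReal.ofReal (Real.pi * r ^ 2)
      ≤ ENNReal.ofReal C

/-- `g ∈ BMO_r^p`. -/
def MemBMO (p r : ℝ) (g : ℂ → ℂ) : Prop :=
  ∃ C : ℝ, ∀ z : ℂ,
    (∫⁻ v in closedBall z r, ENNReal.ofReal (‖g v - avg r g z‖ ^ p)) /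
      ENNReal.ofReal (Real.pi * r ^ 2) ≤ ENNReal.ofReal C

/-- `g ∈ VA_r^p`. -/
def MemVA (p r : ℝ) (g : ℂ → ℂ) : Prop :=
  Tendsto (fun z : ℂ =>
      (∫⁻ v in closedBall z r, ENNReal.ofReal (‖g v‖ ^ p)) / ENNReal.ofReal (Real.pi * r ^ 2))
    (cocompact ℂ) (nhds 0)

/-- `g ∈ VMO_r^p`. -/
def MemVMO (p r : ℝ) (g : ℂ → ℂ) : Prop :=
  Tendsto (fun z : ℂ =>
      (∫⁻ v in closedBall z r, ENNReal.ofReal (‖g v - avg r g z‖ ^ p)) /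
        ENNReal.ofReal (Real.pi * r ^ 2))
    (cocompact ℂ) (nhds 0)

/-- `g ∈ BO_r`. -/
def MemBO (r : ℝ) (g : ℂ → ℂ) : Prop :=
  Continuous g ∧ ∃ C : ℝ, ∀ z : ℂ, ∀ v ∈ closedBall z r, ‖g v - g z‖ ≤ C

/-- `g ∈ VO_r`: continuous with `sup_{v ∈ B(z;r)} |g(v) − g(z)| → 0` as `|z| → ∞`. -/
def MemVO (r : ℝ) (g : ℂ → ℂ) : Prop :=
  Continuous g ∧ ∀ ε > (0 : ℝ), ∃ M : ℝ, ∀ z : ℂ, M < ‖z‖ →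
    ∀ v ∈ closedBall z r, ‖g v - g z‖ ≤ ε

/-- The reproducing kernel `K_z^m(v) = Σ_k (m!/(k+m)!) (z̄ v)^k`. -/
def Kker (m : ℕ) (z v : ℂ) : ℂ :=
  ∑' k : ℕ, ((Nat.factorial m : ℂ) / (Nat.factorial (k + m) : ℂ)) * ((starRingEnd ℂ) z * v) ^ k

/-- `g ∈ Ω_m`: `g` is measurable and `g · K_u^m` lies in some `L^{p',m}`, for every `u`. -/
def MemOmega (m : ℕ) (g : ℂ → ℂ) : Prop :=
  Measurable g ∧ ∀ u : ℂ, ∃ p' : ℝ, 1 ≤ p' ∧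
    (∫⁻ w : ℂ, ENNReal.ofReal (‖g w * Kker m u w‖ ^ p' * ‖w‖ ^ ((m : ℝ) * p') *
      Real.exp (-(p' / 2) * ‖w‖ ^ 2))) < ⊤

/-- The normalizing constant `ω_{p,m}`. -/
def omegaC (m : ℕ) (p : ℝ) : ℝ :=
  (p / 2) ^ ((m : ℝ) * p / 2 + 1) / (Real.pi * Real.Gamma ((m : ℝ) * p / 2 + 1))

/-- The `p`-th power of the Fock–Sobolev norm `‖h‖_{p,m}^p`, as an extended real. -/
def fockNormP (m : ℕ) (p : ℝ) (h : ℂ → ℂ) : ℝ≥0∞ :=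
  ENNReal.ofReal (omegaC m p) *
    ∫⁻ v : ℂ, ENNReal.ofReal (‖h v‖ ^ p * ‖v‖ ^ ((m : ℝ) * p) *
      Real.exp (-(p / 2) * ‖v‖ ^ 2))

/-- The Hankel operator `H_g f`. -/
def hankel (m : ℕ) (g f : ℂ → ℂ) (z : ℂ) : ℂ :=
  Real.pi⁻¹ • ∫ v : ℂ, (‖v‖ ^ (2 * m) * Real.exp (-(‖v‖ ^ 2))) •
    ((g z - g v) * f v * (starRingEnd ℂ) (Kker m z v))

theorem extReal19 (r C : ℝ) (hr : 0 < r) (hC : 0 < C) (f : ℂ → ℝ)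
    (hf : ∀ z v : ℂ, r < ‖z‖ → r < ‖v‖ →
      |f z - f v| ≤ C * (1 + ‖z - v‖)) :
    ∃ F : ℂ → ℝ, (∀ z, r < ‖z‖ → F z = f z) ∧
      ∀ z v, |F z - F v| ≤ C * (1 + ‖z - v‖) := by
  classical
  set ω : ℂ → ℂ → ℝ := fun z w => if z = w then 0 else C * (1 + ‖z - w‖)
    with hωdef
  have hωnn : ∀ z w : ℂ, 0 ≤ ω z w := by
    intro z w
    simp only [hωdef]
    split
    · exact le_refl 0
    · have := norm_nonneg (z - w); positivity
  have hωle : ∀ z w : ℂ, ω z w ≤ C * (1 + ‖z - w‖) := by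
    intro z w
    simp only [hωdef]
    split
    · have := norm_nonneg (z - w); positivity
    · exact le_refl _
  have hωge : ∀ z w : ℂ, C * ‖z - w‖ ≤ ω z w := by
    intro z w
    simp only [hωdef]
    split
    · rename_i h; simp [h]
    · nlinarith [norm_nonneg (z - w)]
  have htri : ∀ z v w : ℂ, ω z w ≤ ω v w + ω z v := by
    intro z v w
    by_cases h1 : z = w
    · simp only [hωdef, if_pos h1]
      exact add_nonneg (hωnn v w) (hωnn z v)
    by_cases h2 : v = w
    · subst h2
      simp only [hωdef, if_pos rfl, if_neg h1]
      linarith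
    by_cases h3 : z = v
    · subst h3
      simp only [hωdef, if_pos rfl, if_neg h1, if_neg h2]
      linarith
    · simp only [hωdef, if_neg h1, if_neg h2, if_neg h3]
      have : ‖z - w‖ ≤ ‖z - v‖ + ‖v - w‖ := by
        simpa using norm_sub_le_norm_sub_add_norm_sub z v w
      nlinarith
  -- the key pointwise bound from hf
  have hkey : ∀ z w : ℂ, r < ‖z‖ → r < ‖w‖ → f z ≤ f w + ω z w := by
    intro z w hz hw
    by_cases h : z = w
    · simp [hωdef, h]
    · have := hf z w hz hw
      have h1 : f z - f w ≤ C * (1 + ‖z - w‖) := (abs_le.mp this).2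
      simp only [hωdef, if_neg h]
      linarith
  set S : ℂ → Set ℝ := fun z => (fun w => f w + ω z w) '' {w : ℂ | r < ‖w‖}
    with hSdef
  have hw0 : r < ‖((2 * r : ℝ) : ℂ)‖ := by
    rw [Complex.norm_real, Real.norm_eq_abs, abs_of_pos (by linarith)]; linarith
  have hne : ∀ z : ℂ, (S z).Nonempty := fun z => ⟨_, ⟨((2 * r : ℝ) : ℂ), hw0, rfl⟩⟩
  have hbdd : ∀ z : ℂ, BddBelow (S z) := by
    intro z
    refine ⟨f (((2 * r : ℝ) : ℂ)) - C * (1 + ‖z - ((2 * r : ℝ) : ℂ)‖), ?_⟩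
    rintro x ⟨w, hw, rfl⟩
    dsimp only
    have h1 : |f (((2 * r : ℝ) : ℂ)) - f w| ≤ C * (1 + ‖((2 * r : ℝ) : ℂ) - w‖) :=
      hf _ _ hw0 hw
    have h2 : f (((2 * r : ℝ) : ℂ)) - f w ≤ C * (1 + ‖((2 * r : ℝ) : ℂ) - w‖) :=
      (abs_le.mp h1).2
    have h3 : ‖((2 * r : ℝ) : ℂ) - w‖
        ≤ ‖((2 * r : ℝ) : ℂ) - z‖ + ‖z - w‖ := by
      simpa using norm_sub_le_norm_sub_add_norm_sub (((2 * r : ℝ) : ℂ)) z w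
    have h4 := hωge z w
    have h5 : ‖((2 * r : ℝ) : ℂ) - z‖ = ‖z - ((2 * r : ℝ) : ℂ)‖ :=
      by rw [norm_sub_rev]
    nlinarith
  set F : ℂ → ℝ := fun z => sInf (S z) with hFdef
  have hFeq : ∀ z : ℂ, r < ‖z‖ → F z = f z := by
    intro z hz
    apply le_antisymm
    · have : f z + ω z z ∈ S z := ⟨z, hz, rfl⟩
      have h0 : ω z z = 0 := by simp [hωdef]
      have := csInf_le (hbdd z) this
      rw [h0, add_zero] at this
      exact this
    · apply le_csInf (hne z)
      rintro x ⟨w, hw, rfl⟩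
      exact hkey z w hz hw
  have hlip : ∀ z v : ℂ, F z ≤ F v + ω z v := by
    intro z v
    have : F z - ω z v ≤ sInf (S v) := by
      apply le_csInf (hne v)
      rintro x ⟨w, hw, rfl⟩
      dsimp only
      have h1 : F z ≤ f w + ω z w := csInf_le (hbdd z) ⟨w, hw, rfl⟩
      have := htri z v w
      linarith
    linarith [this]
  refine ⟨F, hFeq, ?_⟩
  intro z v
  have h1 := hlip z v
  have h2 := hlip v z
  have hsymm : ω v z = ω z v := by
    simp only [hωdef]
    by_cases h : z = v
    · simp [h]
    · rw [if_neg h, if_neg (Ne.symm h), norm_sub_rev]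
  rw [hsymm] at h2
  have := hωle z v
  rw [abs_le]
  constructor <;> linarith

/-- a function with Lipschitz-type growth outside a disk extends to the
whole plane with the constant at most doubled. -/
theorem stmt19 (r C : ℝ) (hr : 0 < r) (hC : 0 < C) (g : ℂ → ℂ)
    (hg : ∀ z v : ℂ, r < ‖z‖ → r < ‖v‖ →
      ‖g z - g v‖ ≤ C * (1 + ‖z - v‖)) :
    ∃ G : ℂ → ℂ, (∀ z : ℂ, r < ‖z‖ → G z = g z) ∧
      ∀ z v : ℂ, ‖G z - G v‖ ≤ 2 * C * (1 + ‖z - v‖) := by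
  obtain ⟨U, hUeq, hUlip⟩ := extReal19 r C hr hC (fun z => (g z).re) (by
    intro z v hz hv
    have h1 : |(g z - g v).re| ≤ ‖g z - g v‖ := Complex.abs_re_le_norm _
    have h2 := hg z v hz hv
    calc |(g z).re - (g v).re| = |(g z - g v).re| := by rw [Complex.sub_re]
    _ ≤ ‖g z - g v‖ := h1
    _ ≤ C * (1 + ‖z - v‖) := h2)
  obtain ⟨V, hVeq, hVlip⟩ := extReal19 r C hr hC (fun z => (g z).im) (by
    intro z v hz hv
    have h1 : |(g z - g v).im| ≤ ‖g z - g v‖ := Complex.abs_im_le_norm _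
    have h2 := hg z v hz hv
    calc |(g z).im - (g v).im| = |(g z - g v).im| := by rw [Complex.sub_im]
    _ ≤ ‖g z - g v‖ := h1
    _ ≤ C * (1 + ‖z - v‖) := h2)
  refine ⟨fun z => ⟨U z, V z⟩, ?_, ?_⟩
  · intro z hz
    apply Complex.ext
    · exact hUeq z hz
    · exact hVeq z hz
  · intro z v
    have key : ‖(⟨U z, V z⟩ : ℂ) - ⟨U v, V v⟩‖
        ≤ |U z - U v| + |V z - V v| := by
      have := Complex.norm_le_abs_re_add_abs_im ((⟨U z, V z⟩ : ℂ) - ⟨U v, V v⟩)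
      simpa using this
    have := hUlip z v
    have := hVlip z v
    calc ‖(⟨U z, V z⟩ : ℂ) - ⟨U v, V v⟩‖ ≤ |U z - U v| + |V z - V v| := key
    _ ≤ 2 * C * (1 + ‖z - v‖) := by linarith

end
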